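/- Let ν be a probability measure and m, m_{old}, h strictly positive probability densities with respect to ν such that ∫ m·(h/m_{old}) dν < ∞. Using the expansion log(1+z) = z - z²R(z) with R(z) ≤ (1/2)max(1, 1/(1+z)²), the KL increment satisfies: KL(m ‖ (1-v)m_{old} + v h) - KL(m ‖ m_{old}) = -v·(∫ m·(h/m_{old}) dν - 1) + v²·∫ m(y)·(h(y)/m_{old}(y) - 1)²·R(v(h(y)/m_{old}(y) - 1)) ν(dy), for v ∈ (0,1). -/

import Mathlib

open MeasureTheory

/-- The second order Taylor remainder of `log (1+z)`:
`log (1+z) = z - z² R z` with `R 0 = 1/2`. -/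
noncomputable def taylorRemainderR (z : ℝ) : ℝ :=
  if z = 0 then 1/2 else (z - Real.log (1 + z)) / z ^ 2

lemma sq_mul_taylorRemainderR (z : ℝ) :
    z ^ 2 * taylorRemainderR z = z - Real.log (1 + z) := by
  unfold taylorRemainderR
  split_ifs with hz
  · simp [hz]
  · field_simp

/-- Exact one-step drift-plus-error decomposition of the KL increment in the PRx update:
`KL(m ‖ (1-v) m_old + v h) - KL(m ‖ m_old)
  = -v (∫ m (h/m_old) dν - 1) + v² ∫ m (h/m_old - 1)² R(v(h/m_old - 1)) dν`. -/
theorem kl_increment_decomposition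
    {Y : Type*} [MeasurableSpace Y] (ν : Measure Y) [IsProbabilityMeasure ν]
    (m mold h : Y → ℝ)
    (hmpos : ∀ y, 0 < m y) (hmoldpos : ∀ y, 0 < mold y) (hhpos : ∀ y, 0 < h y)
    (hmint : Integrable m ν) (hmoldint : Integrable mold ν) (hhint : Integrable h ν)
    (hm1 : ∫ y, m y ∂ν = 1) (hmold1 : ∫ y, mold y ∂ν = 1) (hh1 : ∫ y, h y ∂ν = 1)
    (hratio : Integrable (fun y => m y * (h y / mold y)) ν)
    (v : ℝ) (hv : v ∈ Set.Ioo (0:ℝ) 1)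
    (hKL' : Integrable
      (fun y => m y * Real.log (m y / ((1 - v) * mold y + v * h y))) ν)
    (hKL : Integrable (fun y => m y * Real.log (m y / mold y)) ν)
    (hE : Integrable (fun y => m y * (h y / mold y - 1) ^ 2 *
      taylorRemainderR (v * (h y / mold y - 1))) ν) :
    (∫ y, m y * Real.log (m y / ((1 - v) * mold y + v * h y)) ∂ν) -
        (∫ y, m y * Real.log (m y / mold y) ∂ν) =
      -(v * ((∫ y, m y * (h y / mold y) ∂ν) - 1)) +
        v ^ 2 * ∫ y, m y * (h y / mold y - 1) ^ 2 *
          taylorRemainderR (v * (h y / mold y - 1)) ∂ν := by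
  obtain ⟨hv0, hv1⟩ := hv
  have hg1 : Integrable (fun y => m y * (h y / mold y - 1)) ν := by
    have := hratio.sub hmint
    exact this.congr (Filter.Eventually.of_forall fun y => by simp only [Pi.sub_apply]; ring)
  have key : ∀ y, m y * Real.log (m y / ((1 - v) * mold y + v * h y)) -
      m y * Real.log (m y / mold y) =
      -v * (m y * (h y / mold y - 1)) +
        v ^ 2 * (m y * (h y / mold y - 1) ^ 2 *
          taylorRemainderR (v * (h y / mold y - 1))) := by
    intro y
    have hm := hmpos y
    have hmo := hmoldpos y
    have hh := hhpos y
    have h1v : (0:ℝ) < 1 - v := by linarith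
    have hA : 0 < (1 - v) * mold y + v * h y := by positivity
    set z : ℝ := v * (h y / mold y - 1) with hzdef
    have hzz : (1 : ℝ) + z = ((1 - v) * mold y + v * h y) / mold y := by
      field_simp [hzdef]
      rw [hzdef]
      linear_combination v * div_mul_cancel₀ (h y) hmo.ne'
    have hlog : Real.log (m y / ((1 - v) * mold y + v * h y)) -
        Real.log (m y / mold y) = -Real.log (1 + z) := by
      rw [Real.log_div hm.ne' hA.ne', Real.log_div hm.ne' hmo.ne', hzz,
        Real.log_div hA.ne' hmo.ne']
      ring
    have hR := sq_mul_taylorRemainderR z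
    have : m y * Real.log (m y / ((1 - v) * mold y + v * h y)) -
        m y * Real.log (m y / mold y) = m y * (-Real.log (1 + z)) := by
      rw [← hlog]; ring
    rw [this]
    have hlogz : Real.log (1 + z) = z - z ^ 2 * taylorRemainderR z := by
      rw [hR]; ring
    rw [hlogz, hzdef]
    ring
  rw [← integral_sub hKL' hKL]
  have : (fun y => m y * Real.log (m y / ((1 - v) * mold y + v * h y)) -
      m y * Real.log (m y / mold y)) =
      (fun y => -v * (m y * (h y / mold y - 1)) +
        v ^ 2 * (m y * (h y / mold y - 1) ^ 2 *
          taylorRemainderR (v * (h y / mold y - 1)))) := funext key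
  rw [this, integral_add (hg1.const_mul _) (hE.const_mul _),
    integral_const_mul, integral_const_mul]
  have : ∫ y, m y * (h y / mold y - 1) ∂ν =
      (∫ y, m y * (h y / mold y) ∂ν) - 1 := by
    rw [show (fun y => m y * (h y / mold y - 1)) =
      (fun y => m y * (h y / mold y) - m y) from funext fun y => by ring,
      integral_sub hratio hmint, hm1]
  rw [this]
  ring
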